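/- Let X be a group, π a set of primes, and Y a subnormal subgroup of X of finite π-index (there is a chain Y = Y₀ ⊴ Y₁ ⊴ ⋯ ⊴ Yₙ = X and [X : Y] is a finite π-number). Then X is 𝓕_π-quasi-regular by Y: for every normal subgroup M of Y with Y/M a finite π-group, there exists a normal subgroup N of X with X/N a finite π-group and N ∩ Y ≤ M; moreover N may be chosen with N ≤ M. -/

import Mathlib

open Pointwise

def IsPiNumber (π : Set ℕ) (n : ℕ) : Prop := n ≠ 0 ∧ ∀ p : ℕ, p.Prime → p ∣ n → p ∈ π

def IsPiPrimeNumber (π : Set ℕ) (n : ℕ) : Prop := n ≠ 0 ∧ ∀ p : ℕ, p.Prime → p ∣ n → p ∉ π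

/-- `N` is a normal subgroup of finite π-index, i.e. `N ∈ Ω_π(X)`. -/
def InOmega (π : Set ℕ) {X : Type*} [Group X] (N : Subgroup X) : Prop :=
  N.Normal ∧ IsPiNumber π N.index

/-- `Y` is separable by the family `F` of subgroups. -/
def SepBy {X : Type*} [Group X] (F : Set (Subgroup X)) (Y : Subgroup X) : Prop :=
  (⋂ N ∈ F, (Y : Set X) * (N : Set X)) = (Y : Set X)

/-- `Y` is 𝓕_π-separable in `X`. -/
def SepIn (π : Set ℕ) {X : Type*} [Group X] (Y : Subgroup X) : Prop :=
  SepBy {N : Subgroup X | InOmega π N} Y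

/-- `Y` is π'-isolated in `X`. -/
def Isolated (π : Set ℕ) {X : Type*} [Group X] (Y : Subgroup X) : Prop :=
  ∀ x : X, ∀ q : ℕ, IsPiPrimeNumber π q → x ^ q ∈ Y → x ∈ Y

/-- `X` is residually a finite π-group. -/
def ResiduallyPi (π : Set ℕ) (X : Type*) [Group X] : Prop :=
  ∀ x : X, x ≠ 1 → ∃ N : Subgroup X, InOmega π N ∧ x ∉ N

lemma IsPiNumber.of_dvd {π : Set ℕ} {m n : ℕ} (h : IsPiNumber π n) (hd : m ∣ n) :
    IsPiNumber π m :=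
  ⟨fun h0 => h.1 (Nat.eq_zero_of_zero_dvd (h0 ▸ hd)), fun p pp pd => h.2 p pp (pd.trans hd)⟩

lemma IsPiNumber.mul {π : Set ℕ} {m n : ℕ} (hm : IsPiNumber π m) (hn : IsPiNumber π n) :
    IsPiNumber π (m * n) :=
  ⟨Nat.mul_ne_zero hm.1 hn.1, fun p pp pd =>
    ((Nat.Prime.dvd_mul pp).mp pd).elim (hm.2 p pp) (hn.2 p pp)⟩

section Aux
variable {G : Type*} [Group G]

lemma map_conj_of_normal (c : G) (K : Subgroup G) (hK : K.Normal) :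
    K.map (MulAut.conj c).toMonoidHom = K := by
  ext x
  simp only [Subgroup.mem_map, MulEquiv.coe_toMonoidHom, MulAut.conj_apply]
  constructor
  · rintro ⟨y, hy, rfl⟩; exact hK.conj_mem y hy c
  · intro hx; exact ⟨c⁻¹ * x * c, by simpa using hK.conj_mem x hx c⁻¹, by group⟩

lemma pi_inf (π : Set ℕ) (K A B : Subgroup G) (hA : A ≤ K) (hB : B ≤ K)
    (hAn : (A.subgroupOf K).Normal) (hBn : (B.subgroupOf K).Normal)
    (hApi : IsPiNumber π (A.relIndex K)) (hBpi : IsPiNumber π (B.relIndex K)) :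
    ((A ⊓ B).subgroupOf K).Normal ∧ IsPiNumber π ((A ⊓ B).relIndex K) := by
  constructor
  · constructor
    intro x hx g
    rw [Subgroup.mem_subgroupOf] at hx ⊢
    exact ⟨hAn.conj_mem x (Subgroup.mem_subgroupOf.mpr hx.1) g,
      hBn.conj_mem x (Subgroup.mem_subgroupOf.mpr hx.2) g⟩
  · have h1 : (A ⊓ B).relIndex A * A.relIndex K = (A ⊓ B).relIndex K :=
      Subgroup.relIndex_mul_relIndex _ _ _ inf_le_left hA
    have h2 : (A ⊓ B).relIndex A = B.relIndex A := by
      rw [inf_comm, Subgroup.inf_relIndex_right]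
    have h3 : B.relIndex A ∣ B.relIndex K := by
      haveI := hBn
      have := Subgroup.relIndex_dvd_index_of_normal (H := B.subgroupOf K) (K := A.subgroupOf K)
      rwa [Subgroup.relIndex_subgroupOf hA] at this
    rw [← h1, h2]
    exact (hBpi.of_dvd h3).mul hApi

lemma pi_sInf (π : Set ℕ) (K : Subgroup G) (S : Set (Subgroup G)) (hS : S.Finite)
    (h : ∀ A ∈ S, A ≤ K ∧ (A.subgroupOf K).Normal ∧ IsPiNumber π (A.relIndex K)) :
    ((K ⊓ sInf S).subgroupOf K).Normal ∧ IsPiNumber π ((K ⊓ sInf S).relIndex K) := by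
  refine Set.Finite.induction_on_subset _ hS ?_ ?_
  · simp only [sInf_empty, inf_top_eq]
    constructor
    · rw [Subgroup.subgroupOf_self]; infer_instance
    · rw [Subgroup.relIndex_self]
      exact ⟨one_ne_zero, fun p pp pd => absurd (Nat.le_of_dvd one_pos pd) pp.one_lt.not_ge⟩
  · rintro A S' hAS hS'S hAS' ih'
    have hA := h A hAS
    have key : K ⊓ sInf (insert A S') = A ⊓ (K ⊓ sInf S') := by
      rw [sInf_insert, ← inf_assoc, ← inf_assoc, inf_comm K A, inf_of_le_left hA.1]
    rw [key]
    exact pi_inf π K A (K ⊓ sInf S') hA.1 inf_le_left hA.2.1 ih'.1 hA.2.2 ih'.2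

/-- Core step: if `K` is normal in `G` of π-index and `M ≤ K` is normal in `K` of π-relIndex,
then there is a normal subgroup of `G` of π-index inside `M`. -/
lemma step (π : Set ℕ) (K M : Subgroup G) (hKn : K.Normal) (hK : IsPiNumber π K.index)
    (hMK : M ≤ K) (hMn : ∀ a ∈ M, ∀ b ∈ K, b * a * b⁻¹ ∈ M)
    (hM : IsPiNumber π (M.relIndex K)) :
    ∃ N : Subgroup G, N.Normal ∧ IsPiNumber π N.index ∧ N ≤ M := by
  classical
  set F : G → Subgroup G := fun g => M.comap (MulAut.conj g⁻¹).toMonoidHom with hF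
  have hFmem : ∀ g x, x ∈ F g ↔ g⁻¹ * x * g ∈ M := by
    intro g x
    simp [hF, Subgroup.mem_comap, MulAut.conj_apply]
  -- K is contained in the normalizer of M
  have hKnorm : K ≤ (Subgroup.normalizer (M : Set G)) := by
    intro b hb
    rw [Subgroup.mem_normalizer_iff]
    intro h
    constructor
    · intro hh; exact hMn h hh b hb
    · intro hh
      have := hMn _ hh b⁻¹ (K.inv_mem hb)
      simpa [mul_assoc] using this
  -- the range of F is finite
  haveI : (Subgroup.normalizer (M : Set G)).FiniteIndex := by
    constructor
    intro h0
    exact hK.1 (Nat.eq_zero_of_zero_dvd (h0 ▸ Subgroup.index_dvd_of_le hKnorm))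
  have hlift : ∀ x y : G, (QuotientGroup.leftRel (Subgroup.normalizer (M : Set G))) x y → F x = F y := by
    intro x y hxy
    rw [QuotientGroup.leftRel_apply] at hxy
    ext z
    rw [hFmem, hFmem]
    set n := x⁻¹ * y with hn
    have hy : y = x * n := by rw [hn]; group
    have hninv : n⁻¹ ∈ (Subgroup.normalizer (M : Set G)) := (Subgroup.normalizer (M : Set G)).inv_mem hxy
    rw [Subgroup.mem_normalizer_iff] at hninv
    have h4 : y⁻¹ * z * y = n⁻¹ * (x⁻¹ * z * x) * n⁻¹⁻¹ := by rw [hy]; group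
    rw [h4]
    exact hninv (x⁻¹ * z * x)
  set Fbar : G ⧸ (Subgroup.normalizer (M : Set G)) → Subgroup G := Quotient.lift F hlift with hFbar
  have hrange : Set.range F ⊆ Set.range Fbar := by
    rintro A ⟨g, rfl⟩
    exact ⟨QuotientGroup.mk g, rfl⟩
  have hfin : (Set.range F).Finite := (Set.finite_range Fbar).subset hrange
  -- each conjugate satisfies the needed properties
  have hprops : ∀ A ∈ Set.range F, A ≤ K ∧ (A.subgroupOf K).Normal ∧
      IsPiNumber π (A.relIndex K) := by
    rintro A ⟨g, rfl⟩
    refine ⟨?_, ?_, ?_⟩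
    · intro x hx
      rw [hFmem] at hx
      have : g * (g⁻¹ * x * g) * g⁻¹ ∈ K := hKn.conj_mem _ (hMK hx) g
      simpa [mul_assoc] using this
    · constructor
      rintro ⟨x, hxK⟩ hx ⟨b, hbK⟩
      rw [Subgroup.mem_subgroupOf] at hx ⊢
      simp only [Subgroup.coe_mul, InvMemClass.coe_inv] at hx ⊢
      rw [hFmem] at hx ⊢
      have hb' : g⁻¹ * b * g ∈ K := by
        have := hKn.conj_mem b hbK g⁻¹
        simpa [mul_assoc] using this
      have := hMn _ hx _ hb'
      have heq : g⁻¹ * b * g * (g⁻¹ * x * g) * (g⁻¹ * b * g)⁻¹ = g⁻¹ * (b * x * b⁻¹) * g := by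
        group
      rwa [heq] at this
    · have h5 := Subgroup.relIndex_comap (H := M) (MulAut.conj g⁻¹).toMonoidHom K
      rw [hF, h5, map_conj_of_normal _ _ hKn]
      exact hM
  -- define N as the intersection of all conjugates
  set N : Subgroup G := sInf (Set.range F) with hN
  have hNM : N ≤ M := by
    have h6 : F 1 = M := by ext x; rw [hFmem]; simp
    intro x hx
    have h7 := Subgroup.mem_sInf.mp hx (F 1) ⟨1, rfl⟩
    rwa [h6] at h7
  have hNnormal : N.Normal := by
    constructor
    intro x hx c
    rw [hN, Subgroup.mem_sInf]
    rintro A ⟨g, rfl⟩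
    rw [hFmem]
    have hxm : x ∈ F (c⁻¹ * g) := Subgroup.mem_sInf.mp hx _ ⟨c⁻¹ * g, rfl⟩
    rw [hFmem] at hxm
    have heq : g⁻¹ * (c * x * c⁻¹) * g = (c⁻¹ * g)⁻¹ * x * (c⁻¹ * g) := by group
    rwa [heq]
  have hNK : N ≤ K := hNM.trans hMK
  have hKinf : K ⊓ N = N := inf_eq_right.mpr hNK
  have hpi := pi_sInf π K (Set.range F) hfin hprops
  rw [← hN, hKinf] at hpi
  refine ⟨N, hNnormal, ?_, hNM⟩
  have := Subgroup.relIndex_mul_index hNK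
  rw [← this]
  exact hpi.2.mul hK

end Aux

/-- If `Y` is a subnormal subgroup of finite π-index of `X`, then `X` is
𝓕_π-quasi-regular by `Y`; moreover the witness `N` may be chosen inside `M`. -/
theorem quasiRegular_of_subnormal (π : Set ℕ) {X : Type*} [Group X] (Y : Subgroup X)
    (hchain : ∃ (n : ℕ) (Yc : ℕ → Subgroup X), Yc 0 = Y ∧ Yc n = ⊤ ∧
      ∀ i < n, Yc i ≤ Yc (i + 1) ∧ ((Yc i).subgroupOf (Yc (i + 1))).Normal)
    (hind : IsPiNumber π Y.index) :
    ∀ M : Subgroup X, M ≤ Y →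
      (M.subgroupOf Y).Normal → IsPiNumber π (M.subgroupOf Y).index →
      ∃ N : Subgroup X, InOmega π N ∧ N ⊓ Y ≤ M ∧ N ≤ M := by
  obtain ⟨n, Yc, hY0, hYn, hstep⟩ := hchain
  intro M hMY hMn hMpi
  -- Y is contained in every term of the chain
  have hYle : ∀ i ≤ n, Y ≤ Yc i := by
    intro i
    induction i with
    | zero => intro _; rw [hY0]
    | succ j ih =>
        intro hj
        exact (ih (Nat.le_of_succ_le hj)).trans (hstep j (Nat.lt_of_succ_le hj)).1
  -- main induction along the chain
  have key : ∀ i ≤ n, ∃ N : Subgroup X, N ≤ M ∧ N ≤ Yc i ∧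
      (∀ a ∈ N, ∀ b ∈ Yc i, b * a * b⁻¹ ∈ N) ∧ IsPiNumber π (N.relIndex (Yc i)) := by
    intro i
    induction i with
    | zero =>
        intro _
        refine ⟨M, le_rfl, hY0 ▸ hMY, ?_, ?_⟩
        · intro a ha b hb
          rw [hY0] at hb
          have := hMn.conj_mem ⟨a, hMY ha⟩ (Subgroup.mem_subgroupOf.mpr ha) ⟨b, hb⟩
          rw [Subgroup.mem_subgroupOf] at this
          simpa using this
        · rw [hY0]
          exact hMpi
    | succ j ih =>
        intro hj
        have hjn : j < n := Nat.lt_of_succ_le hj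
        obtain ⟨N, hNM, hNYj, hNnorm, hNpi⟩ := ih (Nat.le_of_succ_le hj)
        obtain ⟨hle, hnrm⟩ := hstep j hjn
        -- work inside the group Yc (j+1)
        set K' : Subgroup (Yc (j+1)) := (Yc j).subgroupOf (Yc (j+1)) with hK'
        set M' : Subgroup (Yc (j+1)) := N.subgroupOf (Yc (j+1)) with hM'
        have hK'pi : IsPiNumber π K'.index := by
          have d1 : (Yc j).relIndex (Yc (j+1)) ∣ (Yc j).index :=
            Subgroup.relIndex_dvd_index_of_le hle
          have d2 : (Yc j).index ∣ Y.index :=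
            Subgroup.index_dvd_of_le (hYle j (Nat.le_of_lt hjn))
          exact hind.of_dvd (d1.trans d2)
        have hM'K' : M' ≤ K' := fun x hx => hNYj hx
        have hM'n : ∀ a ∈ M', ∀ b ∈ K', b * a * b⁻¹ ∈ M' := by
          rintro ⟨a, haY⟩ ha ⟨b, hbY⟩ hb
          rw [Subgroup.mem_subgroupOf] at ha hb ⊢
          simp only [Subgroup.coe_mul, InvMemClass.coe_inv]
          exact hNnorm a ha b hb
        have hM'pi : IsPiNumber π (M'.relIndex K') := by
          rw [hM', hK', Subgroup.relIndex_subgroupOf hle]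
          exact hNpi
        obtain ⟨N', hN'n, hN'pi, hN'M'⟩ := step π K' M' hnrm hK'pi hM'K' hM'n hM'pi
        refine ⟨N'.map (Yc (j+1)).subtype, ?_, ?_, ?_, ?_⟩
        · rintro x ⟨y, hy, rfl⟩
          exact hNM (hN'M' hy)
        · exact Subgroup.map_subtype_le N'
        · rintro x ⟨y, hy, rfl⟩ b hb
          refine ⟨⟨b, hb⟩ * y * ⟨b, hb⟩⁻¹, hN'n.conj_mem y hy ⟨b, hb⟩, ?_⟩
          simp
        · have : (N'.map (Yc (j+1)).subtype).subgroupOf (Yc (j+1)) = N' :=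
            Subgroup.comap_map_eq_self_of_injective (Yc (j+1)).subtype_injective N'
          show IsPiNumber π ((N'.map (Yc (j+1)).subtype).subgroupOf (Yc (j+1))).index
          rw [this]
          exact hN'pi
  obtain ⟨N, hNM, _, hNnorm, hNpi⟩ := key n le_rfl
  have hNnormal : N.Normal := ⟨fun a ha b => hNnorm a ha b (hYn ▸ Subgroup.mem_top b)⟩
  have hNidx : IsPiNumber π N.index := by
    rw [hYn, Subgroup.relIndex_top_right] at hNpi
    exact hNpi
  exact ⟨N, ⟨hNnormal, hNidx⟩, inf_le_left.trans hNM, hNM⟩
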